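/- Every symmetry on A* is either a morphism or an antimorphism of A* whose restriction to A is a permutation of the alphabet; conversely, every morphism or antimorphism of A* restricting to a letter permutation is a symmetry. -/

import Mathlib

open Filter Topology

/-- The prefix of length `n` of an infinite word `u`. -/
def pref {A : Type*} (u : ℕ → A) (n : ℕ) : List A :=
  (List.range n).map u

/-- `w` is a factor of the infinite word `u`. -/
def isFactor {A : Type*} (u : ℕ → A) (w : List A) : Prop :=
  ∃ i, w = (List.range w.length).map (fun j => u (i + j))

/-- The number of occurrences of `w` in the finite word `v`. -/
def occ {A : Type*} [DecidableEq A] (w v : List A) : ℕ :=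
  (List.range (v.length + 1)).countP (fun i => decide ((v.drop i).take w.length = w))

/-- The frequency of the factor `w` in the infinite word `u` is `r`. -/
def freq {A : Type*} [DecidableEq A] (u : ℕ → A) (w : List A) (r : ℝ) : Prop :=
  Tendsto (fun n => (occ w (pref u n) : ℝ) / n) atTop (𝓝 r)

/-- Image of the letter `k` under the generalized Thue–Morse morphism `φ_{b,m}`. -/
def phiL (b : ℕ) {m : ℕ} (k : ZMod m) : List (ZMod m) :=
  (List.range b).map (fun i => k + (i : ZMod m))

/-- Extension of `φ_{b,m}` to finite words. -/
def phiW (b : ℕ) {m : ℕ} (s : List (ZMod m)) : List (ZMod m) :=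
  s.flatMap (phiL b)

/-- `u` is the fixed point of `φ_{b,m}` starting in `0`. -/
def isTM (b m : ℕ) (u : ℕ → ZMod m) : Prop :=
  u 0 = 0 ∧ ∀ n i, i < b → u (b * n + i) = u n + (i : ZMod m)

/-- `Ψ` is a symmetry: a bijection of `A*` preserving numbers of occurrences. -/
def IsSymmetry {A : Type*} [DecidableEq A] (Ψ : List A → List A) : Prop :=
  Function.Bijective Ψ ∧ ∀ w v : List A, occ w v = occ (Ψ w) (Ψ v)

namespace Aux
variable {A : Type*} [DecidableEq A]

lemma occ_cons (w : List A) (b : A) (v : List A) :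
    occ w (b :: v) = (if (b :: v).take w.length = w then 1 else 0) + occ w v := by
  unfold occ
  rw [show (b :: v).length + 1 = (v.length + 1) + 1 from rfl, List.range_succ_eq_map,
    List.countP_cons, List.countP_map]
  simp only [List.drop_zero]
  rw [Nat.add_comm]
  congr 1
  congr 1
  ext i
  simp [Function.comp]

lemma occ_nil_left (v : List A) : occ ([] : List A) v = v.length + 1 := by
  simp [occ]

lemma occ_nil_right (w : List A) : occ w ([] : List A) = if w = [] then 1 else 0 := by
  simp [occ, List.range_succ, eq_comm]

lemma occ_pos_of_infix {w v : List A} (h : w <:+: v) : 0 < occ w v := by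
  obtain ⟨s, t, rfl⟩ := h
  rw [occ, List.countP_pos_iff]
  refine ⟨s.length, ?_, ?_⟩
  · simp
  · simp only [decide_eq_true_iff]
    rw [List.append_assoc, List.drop_left, List.take_left]

lemma occ_pos_elim {w v : List A} (h : 0 < occ w v) :
    ∃ i, i + w.length ≤ v.length ∧ (v.drop i).take w.length = w := by
  rw [occ, List.countP_pos_iff] at h
  obtain ⟨i, hi, hp⟩ := h
  simp only [decide_eq_true_iff] at hp
  refine ⟨i, ?_, hp⟩
  simp only [List.mem_range] at hi
  have := congrArg List.length hp
  simp at this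
  omega

lemma infix_of_occ_pos {w v : List A} (h : 0 < occ w v) : w <:+: v := by
  obtain ⟨i, _, hp⟩ := occ_pos_elim h
  exact (hp ▸ (List.take_prefix _ _).isInfix).trans (List.drop_suffix i v).isInfix

lemma occ_single (a : A) (v : List A) : occ [a] v = v.count a := by
  induction v with
  | nil => simp [occ_nil_right]
  | cons b v ih =>
    rw [occ_cons, ih, List.count_cons]
    simp only [List.length_nil, List.length_cons, Nat.zero_add, List.take_succ_cons,
      List.take_zero]
    by_cases h : b = a <;> simp [h] <;> omega

end Aux

namespace Aux
variable {A : Type*} [DecidableEq A]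

lemma occ_eq_zero_of_lt {w v : List A} (h : v.length < w.length) : occ w v = 0 := by
  by_contra hc
  have := (infix_of_occ_pos (Nat.pos_of_ne_zero hc)).length_le
  omega

lemma occ_length_eq {w v : List A} (h : v.length = w.length) :
    occ w v = if v = w then 1 else 0 := by
  cases v with
  | nil => rw [occ_nil_right]; cases w <;> simp_all
  | cons b v' =>
    rw [occ_cons, occ_eq_zero_of_lt (by simp at h ⊢; omega),
      List.take_of_length_le (by omega)]
    simp

lemma occ_length_succ {w v : List A} (h : v.length = w.length + 1) :
    occ w v = (if v.take w.length = w then 1 else 0) + (if v.drop 1 = w then 1 else 0) := by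
  cases v with
  | nil => simp at h
  | cons b v' =>
    rw [occ_cons, occ_length_eq (by simpa using h)]
    simp

lemma occ_map {f : A → A} (hf : Function.Injective f) (w v : List A) :
    occ (w.map f) (v.map f) = occ w v := by
  unfold occ
  simp only [List.length_map]
  congr 1
  funext i
  simp only [← List.map_drop, ← List.map_take, decide_eq_decide]
  exact (List.map_injective_iff.2 hf).eq_iff

lemma countP_range_eq_card (N : ℕ) (p : ℕ → Bool) :
    (List.range N).countP p = ((Finset.range N).filter (fun i => p i = true)).card := by
  rw [List.countP_eq_length_filter]
  induction N with
  | zero => simp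
  | succ n ih =>
    rw [List.range_succ, List.filter_append, Finset.range_add_one, Finset.filter_insert,
      List.length_append, ih]
    by_cases h : p n = true
    · rw [if_pos h, Finset.card_insert_of_notMem (by simp), List.filter_cons]
      simp [h]
    · rw [if_neg h, List.filter_cons]
      simp [h]

lemma rev_window {v : List A} {i k : ℕ} (h : i + k ≤ v.length) :
    ((v.drop i).take k).reverse = (v.reverse.drop (v.length - k - i)).take k := by
  rw [List.reverse_take, List.reverse_drop, List.drop_take]
  congr 1
  · simp; omega
  · congr 1; simp; omega

lemma take_drop_len_imp {p u : List A} {i k : ℕ} (hk : 0 < k)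
    (h : (u.drop i).take k = p) (hp : p.length = k) : i + k ≤ u.length := by
  have := congrArg List.length h
  simp [hp] at this
  omega

lemma occ_reverse (w v : List A) : occ w.reverse v.reverse = occ w v := by
  rcases eq_or_ne w [] with rfl | hw
  · simp [occ_nil_left]
  have hwpos : 0 < w.length := List.length_pos_of_ne_nil hw
  by_cases hlen : v.length < w.length
  · rw [occ_eq_zero_of_lt hlen, occ_eq_zero_of_lt (by simpa using hlen)]
  push_neg at hlen
  unfold occ
  rw [countP_range_eq_card, countP_range_eq_card]
  simp only [List.length_reverse]
  set n := v.length with hn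
  have key : ∀ i, i + w.length ≤ n →
      (((v.drop i).take w.length = w) ↔
        ((v.reverse.drop (n - w.length - i)).take w.length = w.reverse)) := by
    intro i hi
    rw [show w.length = w.reverse.length by simp]
    have hwr : w.reverse.length = w.length := by simp
    constructor
    · intro h
      rw [← rev_window (by rw [hwr]; omega)]
      exact congrArg List.reverse h
    · intro h
      rw [← rev_window (by rw [hwr]; omega)] at h
      have := congrArg List.reverse h
      simpa using this
  refine Finset.card_bij' (fun i _ => n - w.length - i) (fun j _ => n - w.length - j) ?_ ?_ ?_ ?_
  · intro i hi
    simp only [Finset.mem_filter, decide_eq_true_iff] at hi ⊢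
    have hb : i + w.length ≤ n := by
      simpa using take_drop_len_imp hwpos hi.2 (by simp)
    refine ⟨by simp [Finset.mem_range]; omega, ?_⟩
    refine (key (n - w.length - i) (by omega)).2 ?_
    rw [show n - w.length - (n - w.length - i) = i by omega]
    exact hi.2
  · intro j hj
    simp only [Finset.mem_filter, decide_eq_true_iff] at hj ⊢
    have hb : j + w.length ≤ n := take_drop_len_imp hwpos hj.2 rfl
    exact ⟨by simp [Finset.mem_range]; omega, (key j hb).1 hj.2⟩
  · intro i hi
    simp only [Finset.mem_filter, decide_eq_true_iff] at hi
    have hb : i + w.length ≤ n := by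
      simpa using take_drop_len_imp hwpos hi.2 (by simp)
    beta_reduce
    omega
  · intro j hj
    simp only [Finset.mem_filter, decide_eq_true_iff] at hj
    have hb : j + w.length ≤ n := take_drop_len_imp hwpos hj.2 rfl
    beta_reduce
    omega


def altW (x y : A) : ℕ → List A
  | 0 => []
  | k+1 => x :: altW y x k

@[simp] lemma altW_length : ∀ (k : ℕ) (x y : A), (altW x y k).length = k := by
  intro k
  induction k with
  | zero => intro x y; rfl
  | succ k ih => intro x y; simp [altW, ih]

lemma altW_count {x y : A} (hxy : x ≠ y) :
    ∀ k, (altW x y k).count x = (k+1)/2 ∧ (altW y x k).count x = k/2 := by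
  intro k
  induction k with
  | zero => simp [altW]
  | succ k ih =>
    constructor
    · show (x :: altW y x k).count x = _
      rw [List.count_cons_self, ih.2]
      omega
    · show (y :: altW x y k).count x = _
      rw [List.count_cons, ih.1]
      simp [hxy.symm]

lemma altW_occ {x y : A} (hxy : x ≠ y) :
    ∀ k, occ [x, y] (altW x y k) = k/2 ∧ occ [x, y] (altW y x k) = (k-1)/2 := by
  intro k
  induction k with
  | zero => simp [altW, occ_nil_right]
  | succ k ih =>
    constructor
    · show occ [x,y] (x :: altW y x k) = _
      rw [occ_cons, ih.2]
      cases k with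
      | zero => simp [altW]
      | succ m =>
        rw [if_pos (by simp [altW])]
        omega
    · show occ [x,y] (y :: altW x y k) = _
      rw [occ_cons, ih.1, if_neg (by simp [hxy.symm])]
      omega

lemma altW_getElem? : ∀ (k : ℕ) (x y : A) (i : ℕ),
    (altW x y k)[i]? = if i < k then (if Even i then some x else some y) else none := by
  intro k
  induction k with
  | zero => intro x y i; simp [altW]
  | succ k ih =>
    intro x y i
    cases i with
    | zero => simp [altW]
    | succ i =>
      rw [show altW x y (k+1) = x :: altW y x k from rfl, List.getElem?_cons_succ, ih]
      rcases Nat.even_or_odd i with he | ho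
      · simp [he, Nat.even_add_one, Nat.lt_succ_iff, Nat.succ_lt_succ_iff]
      · simp [Nat.not_even_iff_odd.2 ho, Nat.even_add_one, Nat.succ_lt_succ_iff]

lemma per2_eq_altW : ∀ (N : ℕ) (w : List A) (x y : A), w.length = N →
    (∀ i, i + 2 < w.length → w[i+2]? = w[i]?) →
    w[0]? = some x → w[1]? = some y → w = altW x y N := by
  intro N
  induction N using Nat.strong_induction_on with
  | _ N IH =>
    intro w x y hlen hper h0 h1
    subst hlen
    match w with
    | [] => simp at h0
    | [a] => simp at h1
    | (a :: b :: t) =>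
      have hax : a = x := by simpa using h0
      have hby : b = y := by simpa using h1
      have hrec : altW x y (t.length + 1 + 1) = x :: y :: altW x y t.length := rfl
      simp only [List.length_cons, hrec, hax, hby]
      congr 1
      congr 1
      match t with
      | [] => rfl
      | [c] =>
        have h2 : some c = some a := by simpa using hper 0 (by simp)
        have : c = x := by rw [← hax]; simpa using h2
        simp [altW, this]
      | (c :: d :: t') =>
        have h2 : c = x := by
          rw [← hax]
          simpa using hper 0 (by simp)
        have h3 : d = y := by
          rw [← hby]
          simpa using hper 1 (by simp)
        have hN : (c :: d :: t').length < (a :: b :: c :: d :: t').length := by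
          simp
        have := IH (c :: d :: t').length hN (c :: d :: t') x y rfl
          (fun i hi => by
            have := hper (i + 2) (by simp at hi ⊢; omega)
            simpa using this)
          (by simp [h2]) (by simp [h3])
        simpa using this

lemma pair_of_occ_pos {c d : A} {v : List A} (h : 0 < occ [c, d] v) :
    ∃ j, v[j]? = some c ∧ v[j+1]? = some d := by
  obtain ⟨i, hi, hp⟩ := occ_pos_elim h
  refine ⟨i, ?_, ?_⟩
  · have := congrArg (fun l => l[0]?) hp
    simpa [List.getElem?_take, List.getElem?_drop] using this
  · have := congrArg (fun l => l[1]?) hp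
    simpa [List.getElem?_take, List.getElem?_drop] using this

lemma adj_pair_infix {v : List A} {i : ℕ} (h : i + 1 < v.length) :
    [v[i]'(by omega), v[i+1]'h] <:+: v := by
  refine ⟨v.take i, v.drop (i+2), ?_⟩
  rw [show v.take i ++ [v[i]'(by omega), v[i+1]'h] ++ v.drop (i+2)
      = v.take i ++ (v[i]'(by omega) :: (v[i+1]'h :: v.drop (i+2))) by simp]
  rw [← List.drop_eq_getElem_cons h, ← List.drop_eq_getElem_cons (by omega)]
  exact List.take_append_drop i v

lemma const_of_tail_eq_dropLast :
    ∀ (t : List A) (a : A), (a :: t).tail = (a :: t).dropLast → ∀ x ∈ a :: t, x = a := by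
  intro t
  induction t with
  | nil => simp
  | cons b t' ih =>
    intro a h x hx
    simp only [List.tail_cons, List.dropLast_cons₂] at h
    injection h with hba ht
    have hall := ih b (by simpa using ht) x
    rcases hx with _ | hx
    · rfl
    · rw [hall (by assumption), hba]


lemma altW_self (x : A) : ∀ k, altW x x k = List.replicate k x := by
  intro k
  induction k with
  | zero => rfl
  | succ k ih => simp [altW, ih, List.replicate_succ]

end Aux

set_option maxHeartbeats 2000000 in
open Aux in
lemma engine {A : Type*} [DecidableEq A] (Ψ : List A → List A) (π : A → A)
    (hπ : Function.Injective π) (hπs : Function.Surjective π)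
    (hocc : ∀ w v : List A, occ w v = occ (Ψ w) (Ψ v))
    (hlen : ∀ v : List A, (Ψ v).length = v.length)
    (h1 : ∀ a : A, Ψ [a] = [π a])
    (h2 : ∀ a b : A, Ψ [a, b] = [π a, π b]) :
    ∀ v : List A, Ψ v = v.map π := by
  have hcount : ∀ (c : A) (u : List A), (Ψ u).count (π c) = u.count c := by
    intro c u
    have := hocc [c] u
    rw [h1, occ_single, occ_single] at this
    exact this.symm
  have hnil : Ψ [] = [] := List.length_eq_zero_iff.1 (hlen [])
  have hstep : ∀ (n : ℕ), (∀ u : List A, u.length ≤ n → Ψ u = u.map π) →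
      ∀ v : List A, 3 ≤ v.length → v.length ≤ n + 1 → Ψ v = v.map π := by
    intro n IH v hbig hv
    have hne : v ≠ [] := by intro h; rw [h] at hbig; simp at hbig
    obtain ⟨W, hW⟩ : ∃ W, Ψ v = W := ⟨_, rfl⟩
    have hWlen : W.length = v.length := by rw [← hW]; exact hlen v
    rw [hW]
    by_cases hconst : v.tail = v.dropLast
    · -- constant word
      obtain ⟨a, t, hat⟩ : ∃ a t, v = a :: t := by
        cases v with
        | nil => exact absurd rfl hne
        | cons a t => exact ⟨a, t, rfl⟩
      have hall : ∀ x ∈ v, x = a := by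
        rw [hat] at hconst ⊢
        exact const_of_tail_eq_dropLast _ a hconst
      have hrep : v = List.replicate v.length a := List.eq_replicate_iff.2 ⟨rfl, hall⟩
      have hc : W.count (π a) = v.length := by
        rw [← hW, hcount a v]
        conv_lhs => rw [hrep]
        simp
      have hWrep : W = List.replicate v.length (π a) := by
        refine List.eq_replicate_iff.2 ⟨hWlen, ?_⟩
        intro b hb
        exact (List.count_eq_length.1 (by rw [hc, hWlen]) b hb).symm
      rw [hWrep]
      conv_rhs => rw [hrep]
      simp [List.map_replicate]
    · -- non-constant word
      obtain ⟨p, hp⟩ : ∃ p, v.dropLast = p := ⟨_, rfl⟩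
      obtain ⟨s, hs⟩ : ∃ s, v.tail = s := ⟨_, rfl⟩
      have hplen : p.length = v.length - 1 := by rw [← hp]; simp
      have hslen : s.length = v.length - 1 := by rw [← hs]; simp
      have hps : p ≠ s := by
        rw [← hp, ← hs]
        intro h
        exact hconst h.symm
      have hΨp : Ψ p = p.map π := IH p (by omega)
      have hΨs : Ψ s = s.map π := IH s (by omega)
      have htake : v.take (v.length - 1) = p := by rw [← hp, List.dropLast_eq_take]
      have hdrop : v.drop 1 = s := by rw [← hs, List.drop_one]
      have hvlen_p : v.length = p.length + 1 := by omega
      have hvlen_s : v.length = s.length + 1 := by omega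
      have occp : occ p v = 1 := by
        rw [occ_length_succ hvlen_p, hplen, htake, hdrop, if_pos rfl, if_neg (Ne.symm hps)]
      have occs : occ s v = 1 := by
        rw [occ_length_succ hvlen_s, hslen, htake, hdrop, if_pos rfl, if_neg hps]
      have occWp : occ (p.map π) W = 1 := by rw [← hΨp, ← hW, ← hocc, occp]
      have occWs : occ (s.map π) W = 1 := by rw [← hΨs, ← hW, ← hocc, occs]
      have hWvlen_p : W.length = (p.map π).length + 1 := by simp [hWlen, hplen]; omega
      have hWvlen_s : W.length = (s.map π).length + 1 := by simp [hWlen, hslen]; omega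
      rw [occ_length_succ hWvlen_p] at occWp
      rw [occ_length_succ hWvlen_s] at occWs
      simp only [List.length_map, hplen, hslen] at occWp occWs
      by_cases hA : W.take (v.length - 1) = p.map π
      · -- Case A : straight position
        have hlast : v.dropLast ++ [v.getLast hne] = v := List.dropLast_append_getLast hne
        obtain ⟨l, hl⟩ : ∃ l, v.getLast hne = l := ⟨_, rfl⟩
        rw [hp, hl] at hlast
        obtain ⟨z, hz⟩ : ∃ z, W.drop (v.length - 1) = [z] := by
          apply List.length_eq_one_iff.1
          simp [hWlen]
          omega
        have hWsplit : W = p.map π ++ [z] := by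
          conv_lhs => rw [← List.take_append_drop (v.length - 1) W]
          rw [hA, hz]
        have hcnt : W.count (π l) = p.count l + 1 := by
          rw [← hW, hcount l v]
          conv_lhs => rw [← hlast]
          simp
        have hz2 : z = π l := by
          rw [hWsplit, List.count_append, List.count_map_of_injective _ π hπ,
            List.count_singleton'] at hcnt
          by_contra hzz
          rw [if_neg hzz] at hcnt
          omega
        calc W = List.map π p ++ [π l] := by rw [hWsplit, hz2]
          _ = List.map π (p ++ [l]) := by simp
          _ = List.map π v := by rw [hlast]
      · -- Case B : crossed position
        have hB : W.drop 1 = p.map π := by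
          by_contra hc2
          rw [if_neg hA, if_neg hc2] at occWp
          simp at occWp
        have hBs : W.take (v.length - 1) = s.map π := by
          by_contra hc2
          rw [if_neg hc2] at occWs
          have hds : W.drop 1 = s.map π := by
            by_contra hc3
            rw [if_neg hc3] at occWs
            simp at occWs
          rw [hB] at hds
          exact hps (List.map_injective_iff.2 hπ hds)
        have hkey : s.take (v.length - 2) = p.drop 1 := by
          rw [← htake, ← hdrop, List.drop_take]
          congr 1
        have hper2 : W.take (v.length - 2) = W.drop 2 := by
          have h3 := congrArg (List.map π) hkey
          rw [List.map_take, List.map_drop, ← hBs, ← hB] at h3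
          rw [List.take_take, List.drop_drop] at h3
          rwa [show min (v.length - 2) (v.length - 1) = v.length - 2 by omega] at h3
        have hper : ∀ i, i + 2 < v.length → W[i+2]? = W[i]? := by
          intro i hi
          have h4 := congrArg (fun l => l[i]?) hper2
          simp only [List.getElem?_take, List.getElem?_drop] at h4
          rw [if_pos (by omega)] at h4
          rw [show i + 2 = 2 + i from by omega]
          exact h4.symm
        have h0lt : 0 < W.length := by omega
        have h1lt : 1 < W.length := by omega
        obtain ⟨x, hxdef⟩ : ∃ x, W[0]'h0lt = x := ⟨_, rfl⟩
        obtain ⟨y, hydef⟩ : ∃ y, W[1]'h1lt = y := ⟨_, rfl⟩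
        have hWalt : W = altW x y v.length :=
          per2_eq_altW v.length W x y hWlen (fun i hi => hper i (by omega))
            (by rw [List.getElem?_eq_getElem h0lt, hxdef])
            (by rw [List.getElem?_eq_getElem h1lt, hydef])
        have hgetW : ∀ j, j < v.length → W[j]? = some (if Even j then x else y) := by
          intro j hj
          rw [hWalt, altW_getElem?, if_pos hj]
          split <;> rfl
        by_cases hxy : x = y
        · -- W constant : contradiction with non-constant v
          exfalso
          obtain ⟨a0, ha0⟩ := hπs x
          have hcv : v.count a0 = v.length := by
            rw [← hcount a0 v, ha0, hW, hWalt, ← hxy, altW_self, List.count_replicate]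
            simp
          have hvrep : v = List.replicate v.length a0 := by
            refine List.eq_replicate_iff.2 ⟨rfl, ?_⟩
            intro b hb
            exact (List.count_eq_length.1 (by rw [hcv]) b hb).symm
          apply hconst
          obtain ⟨m, hm⟩ : ∃ m, v.length = m + 1 := ⟨v.length - 1, by omega⟩
          conv_lhs => rw [hvrep, hm, List.replicate_succ, List.tail_cons]
          conv_rhs => rw [hvrep, hm, List.replicate_succ', List.dropLast_concat]
        · -- x ≠ y : both W and map π v alternate
          have hpairv : ∀ i (hi : i + 1 < v.length),
              (π (v[i]'(by omega)) = x ∧ π (v[i+1]'hi) = y) ∨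
              (π (v[i]'(by omega)) = y ∧ π (v[i+1]'hi) = x) := by
            intro i hi
            have hinf := adj_pair_infix (v := v) (i := i) hi
            have hposv := occ_pos_of_infix hinf
            have he := hocc [v[i]'(by omega), v[i+1]'hi] v
            rw [h2, hW] at he
            rw [he] at hposv
            obtain ⟨j, hj1, hj2⟩ := pair_of_occ_pos hposv
            have hjlt : j + 1 < v.length := by
              by_contra hcon
              rw [List.getElem?_eq_none (by omega)] at hj2
              simp at hj2
            rw [hgetW j (by omega)] at hj1
            rw [hgetW (j+1) (by omega)] at hj2
            rcases Nat.even_or_odd j with hev | hod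
            · left
              rw [if_pos hev] at hj1
              rw [if_neg (fun h => (Nat.even_add_one.1 h) hev)] at hj2
              exact ⟨(Option.some_injective _ hj1).symm, (Option.some_injective _ hj2).symm⟩
            · right
              rw [if_neg (Nat.not_even_iff_odd.2 hod)] at hj1
              rw [if_pos (Nat.even_add_one.2 (Nat.not_even_iff_odd.2 hod))] at hj2
              exact ⟨(Option.some_injective _ hj1).symm, (Option.some_injective _ hj2).symm⟩
          obtain ⟨M, hM⟩ : ∃ M, v.map π = M := ⟨_, rfl⟩
          have hMlen : M.length = v.length := by rw [← hM]; simp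
          have hgetM : ∀ j (hj : j < v.length), M[j]? = some (π (v[j]'hj)) := by
            intro j hj
            rw [← hM, List.getElem?_map, List.getElem?_eq_getElem hj]
            rfl
          have hperM : ∀ i, i + 2 < v.length → M[i+2]? = M[i]? := by
            intro i hi
            rw [hgetM i (by omega), hgetM (i+2) (by omega)]
            rcases hpairv i (by omega) with ⟨e1, e2⟩ | ⟨e1, e2⟩ <;>
              rcases hpairv (i+1) (by omega) with ⟨f1, f2⟩ | ⟨f1, f2⟩
            · exact absurd (e2.symm.trans f1) (Ne.symm hxy)
            · have f2' : π (v[i+2]'(by omega)) = x := f2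
              exact congrArg some (f2'.trans e1.symm)
            · have f2' : π (v[i+2]'(by omega)) = y := f2
              exact congrArg some (f2'.trans e1.symm)
            · exact absurd (e2.symm.trans f1) hxy
          have hMalt : M = altW (π (v[0]'(by omega))) (π (v[1]'(by omega))) v.length :=
            per2_eq_altW v.length M _ _ hMlen (fun i hi => hperM i (by omega))
              (hgetM 0 (by omega)) (hgetM 1 (by omega))
          rcases hpairv 0 (by omega) with ⟨e1, e2⟩ | ⟨e1, e2⟩
          · rw [hM, hMalt, e1, e2, hWalt]
          · exfalso
            obtain ⟨a0, ha0⟩ := hπs x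
            obtain ⟨b0, hb0⟩ := hπs y
            have hcntW : W.count x = v.count a0 := by
              rw [← ha0, ← hW, hcount a0 v]
            have hcntM : M.count x = v.count a0 := by
              rw [← ha0, ← hM, List.count_map_of_injective _ π hπ]
            have hoccW : occ [x, y] W = occ [a0, b0] v := by
              have h7 := hocc [a0, b0] v
              rw [h2, hW, ha0, hb0] at h7
              exact h7.symm
            have hoccM : occ [x, y] M = occ [a0, b0] v := by
              rw [← ha0, ← hb0, ← hM]
              exact occ_map hπ [a0, b0] v
            rw [hMalt, e1, e2] at hcntM hoccM
            rw [hWalt] at hcntW hoccW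
            have c1 := (altW_count hxy v.length).1
            have c2 := (altW_count hxy v.length).2
            have o1 := (altW_occ hxy v.length).1
            have o2 := (altW_occ hxy v.length).2
            rw [c1] at hcntW
            rw [c2] at hcntM
            rw [o1] at hoccW
            rw [o2] at hoccM
            omega
  have main : ∀ (n : ℕ) (v : List A), v.length ≤ n → Ψ v = v.map π := by
    intro n
    induction n with
    | zero =>
      intro v hv
      rw [List.length_eq_zero_iff.1 (by omega : v.length = 0)]
      simpa using hnil
    | succ n IH =>
      intro v hv
      match v with
      | [] => simpa using hnil
      | [a] => exact h1 a
      | [a, b] => exact h2 a b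
      | (a :: b :: c :: t) =>
        exact hstep n IH _ (by simp) hv
  exact fun v => main v.length v le_rfl

/-- A map `Ψ : A* → A*` is a symmetry if and only if it is a morphism or an antimorphism
whose restriction to the letters is a permutation of the alphabet. -/
theorem symmetry_iff {A : Type*} [Fintype A] [DecidableEq A] (Ψ : List A → List A) :
    IsSymmetry Ψ ↔
      (((∀ x y : List A, Ψ (x ++ y) = Ψ x ++ Ψ y) ∨
        (∀ x y : List A, Ψ (x ++ y) = Ψ y ++ Ψ x)) ∧
       ∃ π : Equiv.Perm A, ∀ a : A, Ψ [a] = [π a]) := by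
  constructor
  · rintro ⟨⟨hinj, hsurj⟩, hocc⟩
    have count_pair : ∀ c x y : A,
        List.count c [x, y] = (if x = c then 1 else 0) + (if y = c then 1 else 0) := by
      intro c x y
      simp [List.count_cons]
      split <;> split <;> omega
    have hnil : Ψ [] = [] := by
      obtain ⟨v, hv⟩ := hsurj []
      have e := hocc [] v
      rw [Aux.occ_nil_left, hv, Aux.occ_nil_right] at e
      by_cases h : Ψ [] = []
      · exact h
      · rw [if_neg h] at e; omega
    have hlen : ∀ v, (Ψ v).length = v.length := by
      intro v
      have e := hocc [] v
      rw [Aux.occ_nil_left, hnil, Aux.occ_nil_left] at e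
      omega
    have hf' : ∀ a : A, ∃ x, Ψ [a] = [x] := fun a =>
      List.length_eq_one_iff.1 (by simpa using hlen [a])
    choose f hf using hf'
    have hfinj : Function.Injective f := by
      intro a b hab
      have h1 : Ψ [a] = Ψ [b] := by rw [hf, hf, hab]
      simpa using hinj h1
    have hfbij : Function.Bijective f := Finite.injective_iff_bijective.1 hfinj
    have hcount : ∀ (c : A) (u : List A), (Ψ u).count (f c) = u.count c := by
      intro c u
      have e := hocc [c] u
      rw [hf, Aux.occ_single, Aux.occ_single] at e
      exact e.symm
    have hpair : ∀ a b : A, Ψ [a, b] = [f a, f b] ∨ Ψ [a, b] = [f b, f a] := by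
      intro a b
      obtain ⟨x, y, hxy⟩ := List.length_eq_two.1 (by simpa using hlen [a, b])
      have hca := hcount a [a, b]
      have hcb := hcount b [a, b]
      rw [hxy, count_pair, count_pair] at hca hcb
      by_cases hab : a = b
      · subst hab
        rw [if_pos rfl] at hca
        by_cases h1 : x = f a
        · by_cases h2 : y = f a
          · left; rw [hxy, h1, h2]
          · rw [if_pos h1, if_neg h2] at hca; omega
        · rw [if_neg h1] at hca
          by_cases h2 : y = f a
          · rw [if_pos h2] at hca; omega
          · rw [if_neg h2] at hca; omega
      · have hfab : f a ≠ f b := fun h => hab (hfinj h)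
        rw [if_pos rfl, if_neg (show ¬ b = a from fun hh => hab hh.symm)] at hca
        rw [if_neg hab, if_pos rfl] at hcb
        by_cases h1 : x = f a
        · have hx' : ¬ x = f b := by rw [h1]; exact hfab
          rw [if_neg hx'] at hcb
          by_cases h3 : y = f b
          · left; rw [hxy, h1, h3]
          · rw [if_neg h3] at hcb; omega
        · rw [if_neg h1] at hca
          by_cases h3 : y = f a
          · have hy' : ¬ y = f b := by rw [h3]; exact hfab
            rw [if_neg hy'] at hcb
            by_cases h4 : x = f b
            · right; rw [hxy, h4, h3]
            · rw [if_neg h4] at hcb; omega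
          · rw [if_neg h3] at hca; omega
    have hstep : ∀ a b c : A, a ≠ b → b ≠ c → Ψ [a, b] = [f a, f b] → Ψ [b, c] = [f b, f c] := by
      intro a b c hab hbc hs
      by_cases hca : c = a
      · subst hca
        rcases hpair b c with h | h
        · exact h
        · exfalso
          have h5 := hinj (h.trans hs.symm)
          simp at h5
          exact hab h5.1.symm
      · rcases hpair b c with h | h
        · exact h
        exfalso
        have hfab : f a ≠ f b := fun hh => hab (hfinj hh)
        have hfbc : f b ≠ f c := fun hh => hbc (hfinj hh)
        have hfac : f a ≠ f c := fun hh => hca (hfinj hh).symm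
        obtain ⟨x, y, z, hW⟩ := List.length_eq_three.1 (by simpa using hlen [a, b, c])
        have o1 : 0 < occ [a, b] [a, b, c] := Aux.occ_pos_of_infix ⟨[], [c], rfl⟩
        rw [hocc [a, b] [a, b, c], hs, hW] at o1
        obtain ⟨j, hj1, hj2⟩ := Aux.pair_of_occ_pos o1
        have o2 : 0 < occ [b, c] [a, b, c] := Aux.occ_pos_of_infix ⟨[a], [], by simp⟩
        rw [hocc [b, c] [a, b, c], h, hW] at o2
        obtain ⟨k, hk1, hk2⟩ := Aux.pair_of_occ_pos o2
        have hj3 : j + 1 < 3 := by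
          by_contra hcon
          rw [List.getElem?_eq_none (by simp; omega)] at hj2
          simp at hj2
        have hk3 : k + 1 < 3 := by
          by_contra hcon
          rw [List.getElem?_eq_none (by simp; omega)] at hk2
          simp at hk2
        have hj4 : j ≤ 1 := by omega
        have hk4 : k ≤ 1 := by omega
        interval_cases j <;> interval_cases k <;>
          simp only [List.getElem?_cons_zero, List.getElem?_cons_succ,
            Option.some.injEq] at hj1 hj2 hk1 hk2
        · exact hfac (hj1.symm.trans hk1)
        · exact hfbc (hj2.symm.trans hk1)
        · exact hfab (hk2.symm.trans hj1).symm
        · exact hfac (hj1.symm.trans hk1)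
    have hπa : ∀ a : A, Ψ [a] = [(Equiv.ofBijective f hfbij) a] := fun a => hf a
    by_cases hex : ∃ a b : A, a ≠ b ∧ Ψ [a, b] = [f a, f b]
    · -- morphism case
      have h2 : ∀ c d : A, Ψ [c, d] = [f c, f d] := by
        obtain ⟨a, b, hab, hs⟩ := hex
        intro c d
        by_cases hcd : c = d
        · subst hcd
          rcases hpair c c with h | h <;> exact h
        · by_cases hcb : c = b
          · subst hcb
            exact hstep a c d hab hcd hs
          · exact hstep b c d (Ne.symm hcb) hcd (hstep a b c hab (fun hh => hcb hh.symm) hs)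
      have hψ := engine Ψ f hfinj hfbij.2 hocc hlen hf h2
      refine ⟨Or.inl ?_, ⟨Equiv.ofBijective f hfbij, hπa⟩⟩
      intro u w
      rw [hψ, hψ, hψ, List.map_append]
    · -- antimorphism case
      have hrev : ∀ a b : A, Ψ [a, b] = [f b, f a] := by
        intro a b
        by_cases hab : a = b
        · subst hab; rcases hpair a a with h | h <;> exact h
        · rcases hpair a b with h | h
          · exact absurd ⟨a, b, hab, h⟩ hex
          · exact h
      have hψ' := engine (fun u => (Ψ u).reverse) f hfinj hfbij.2
        (fun w v => (hocc w v).trans (Aux.occ_reverse (Ψ w) (Ψ v)).symm)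
        (fun v => by simp [hlen v])
        (fun a => by show (Ψ [a]).reverse = [f a]; rw [hf a]; rfl)
        (fun a b => by show (Ψ [a, b]).reverse = [f a, f b]; rw [hrev a b]; rfl)
      have hψ : ∀ v, Ψ v = (v.map f).reverse := by
        intro v
        have h9 : (Ψ v).reverse = v.map f := hψ' v
        rw [← h9, List.reverse_reverse]
      refine ⟨Or.inr ?_, ⟨Equiv.ofBijective f hfbij, hπa⟩⟩
      intro u w
      rw [hψ, hψ, hψ, List.map_append, List.reverse_append]
  · rintro ⟨hmor, π, hπ⟩
    have hnil : Ψ [] = [] := by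
      have h1 : Ψ [] = Ψ [] ++ Ψ [] := by
        rcases hmor with hm | ha
        · simpa using hm [] []
        · simpa using ha [] []
      have h0 := congrArg List.length h1
      rw [List.length_append] at h0
      exact List.length_eq_zero_iff.1 (by omega)
    rcases hmor with hm | ha
    · -- morphism
      have hψ : ∀ v, Ψ v = v.map π := by
        intro v
        induction v with
        | nil => simpa using hnil
        | cons a t ih =>
          rw [show a :: t = [a] ++ t from rfl, hm, hπ, ih]
          rfl
      constructor
      · rw [funext hψ]
        constructor
        · intro u v h
          exact List.map_injective_iff.2 π.injective h
        · intro u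
          exact ⟨u.map π.symm, by simp [List.map_map]⟩
      · intro w v
        rw [hψ w, hψ v, Aux.occ_map π.injective]
    · -- antimorphism
      have hψ : ∀ v, Ψ v = (v.map π).reverse := by
        intro v
        induction v with
        | nil => simpa using hnil
        | cons a t ih =>
          rw [show a :: t = [a] ++ t from rfl, ha, hπ, ih]
          simp
      constructor
      · rw [funext hψ]
        have hb1 : Function.Bijective (fun v : List A => v.map π) := by
          constructor
          · intro u v h
            exact List.map_injective_iff.2 π.injective h
          · intro u
            exact ⟨u.map π.symm, by simp [List.map_map]⟩
        exact List.reverse_involutive.bijective.comp hb1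
      · intro w v
        rw [hψ w, hψ v, Aux.occ_reverse, Aux.occ_map π.injective]
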